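/- For integers k ≥ 3, r ≥ 2, l ≥ 2, let n = k(⌊r/2⌋ + ⌊(r+l)/2⌋ − 1). There exists an edge-coloring of K_{n,n} = G(U,V) with exactly k colors that contains no rainbow path P_4 on 4 vertices and no monochromatic copy of P_r ∪ P_{r+l} (disjoint union of a path on r vertices and a path on r+l vertices). In particular, bgr_k(P_4 : P_r ∪ P_{r+l}) ≥ k(⌊r/2⌋ + ⌊(r+l)/2⌋) − k + 1. -/

import Mathlib

open Function Finset SimpleGraph

/-- A rainbow path on 4 vertices `u₁ v₁ u₂ v₂` (middle pattern). -/
def rbP4pat {N : ℕ} {γ : Type*} (c : Fin N → Fin N → γ) : Prop :=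
  ∃ u₁ u₂ v₁ v₂ : Fin N, u₁ ≠ u₂ ∧ v₁ ≠ v₂ ∧
    c u₁ v₁ ≠ c u₂ v₁ ∧ c u₁ v₁ ≠ c u₂ v₂ ∧ c u₂ v₁ ≠ c u₂ v₂

/-- The coloring `c` of `K_{N,N}` contains a rainbow path on 4 vertices. -/
def hasRainbowP4 {N : ℕ} {γ : Type*} (c : Fin N → Fin N → γ) : Prop :=
  rbP4pat c ∨ rbP4pat (fun v u => c u v)

/-- A rainbow path on 5 vertices `u₁ v₁ u₂ v₂ u₃` (one-sided pattern). -/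
def rbP5pat {N : ℕ} {γ : Type*} (c : Fin N → Fin N → γ) : Prop :=
  ∃ u₁ u₂ u₃ v₁ v₂ : Fin N, u₁ ≠ u₂ ∧ u₁ ≠ u₃ ∧ u₂ ≠ u₃ ∧ v₁ ≠ v₂ ∧
    c u₁ v₁ ≠ c u₂ v₁ ∧ c u₁ v₁ ≠ c u₂ v₂ ∧ c u₁ v₁ ≠ c u₃ v₂ ∧
    c u₂ v₁ ≠ c u₂ v₂ ∧ c u₂ v₁ ≠ c u₃ v₂ ∧ c u₂ v₂ ≠ c u₃ v₂

/-- The coloring `c` of `K_{N,N}` contains a rainbow path on 5 vertices. -/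
def hasRainbowP5 {N : ℕ} {γ : Type*} (c : Fin N → Fin N → γ) : Prop :=
  rbP5pat c ∨ rbP5pat (fun v u => c u v)

/-- The coloring `c` of `K_{N,N}` contains a rainbow star `K_{1,3}`:
some vertex (on either side) has three incident edges with pairwise distinct colors. -/
def hasRainbowK13 {N : ℕ} {γ : Type*} (c : Fin N → Fin N → γ) : Prop :=
  (∃ u v₁ v₂ v₃ : Fin N, c u v₁ ≠ c u v₂ ∧ c u v₁ ≠ c u v₃ ∧ c u v₂ ≠ c u v₃) ∨
  (∃ v u₁ u₂ u₃ : Fin N, c u₁ v ≠ c u₂ v ∧ c u₁ v ≠ c u₃ v ∧ c u₂ v ≠ c u₃ v)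

/-- The coloring `c` of `K_{N,N}` (first coordinate: side `U`, second: side `V`)
contains a monochromatic copy of the (bipartite) graph `H`. -/
def hasMonoCopy {N : ℕ} {γ : Type*} {α : Type*} (c : Fin N → Fin N → γ)
    (H : SimpleGraph α) : Prop :=
  ∃ i : γ, ∃ f : α → Fin N ⊕ Fin N, Function.Injective f ∧
    ∀ a b, H.Adj a b → ∃ u v : Fin N, c u v = i ∧
      ((f a = Sum.inl u ∧ f b = Sum.inr v) ∨ (f a = Sum.inr v ∧ f b = Sum.inl u))

/-- The coloring `c` of `K_{N,N}` contains a monochromatic copy of `K_{s,t}`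
(in either orientation with respect to the two sides). -/
def hasMonoKst {N : ℕ} {γ : Type*} (c : Fin N → Fin N → γ) (s t : ℕ) : Prop :=
  ∃ i : γ, ∃ S T : Finset (Fin N),
    ((S.card = s ∧ T.card = t) ∨ (S.card = t ∧ T.card = s)) ∧
    ∀ u ∈ S, ∀ v ∈ T, c u v = i

/-- Disjoint union of a family of graphs, on the sigma type. -/
def sigmaUnion {ι : Type*} {β : ι → Type*} (G : ∀ i, SimpleGraph (β i)) :
    SimpleGraph (Σ i, β i) where
  Adj x y := ∃ i a b, (G i).Adj a b ∧ x = ⟨i, a⟩ ∧ y = ⟨i, b⟩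
  symm := ⟨by rintro x y ⟨i, a, b, h, rfl, rfl⟩; exact ⟨i, b, a, h.symm, rfl, rfl⟩⟩
  loopless := ⟨by
    rintro x ⟨i, a, b, h, rfl, h2⟩
    obtain rfl : a = b := by simpa using h2
    exact h.ne rfl⟩


/-- `n` witnesses the bipartite Gallai–Ramsey property for a rainbow `P₄`
versus a monochromatic `P_r ∪ P_{r+l}` with `k` colors. -/
def bgrP4PP (k r l n : ℕ) : Prop :=
  k ≤ n ^ 2 ∧ ∀ N : ℕ, n ≤ N → ∀ c : Fin N → Fin N → Fin k,
    (∀ i : Fin k, ∃ u v, c u v = i) →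
    hasRainbowP4 c ∨ hasMonoCopy c (pathGraph r ⊕g pathGraph (r + l))

/-- lower-bound construction for `bgr_k(P₄ : P_r ∪ P_{r+l})`:
on `K_{n,n}` with `n = k(⌊r/2⌋+⌊(r+l)/2⌋−1)` there is an exact `k`-coloring with no
rainbow `P₄` and no monochromatic `P_r ∪ P_{r+l}`; in particular
`bgr_k(P₄ : P_r ∪ P_{r+l}) ≥ k(⌊r/2⌋+⌊(r+l)/2⌋) − k + 1`. -/
theorem stmt4 (k r l : ℕ) (hk : 3 ≤ k) (hr : 2 ≤ r) (hl : 2 ≤ l) :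
    (∃ c : Fin (k * (r / 2 + (r + l) / 2 - 1)) → Fin (k * (r / 2 + (r + l) / 2 - 1)) → Fin k,
      (∀ i : Fin k, ∃ u v, c u v = i) ∧
      ¬ hasRainbowP4 c ∧
      ¬ hasMonoCopy c (pathGraph r ⊕g pathGraph (r + l))) ∧
    (∀ m : ℕ, bgrP4PP k r l m → k * (r / 2 + (r + l) / 2) - k + 1 ≤ m) := by
  classical
  have hX3 : 3 ≤ r / 2 + (r + l) / 2 := by omega
  set X : ℕ := r / 2 + (r + l) / 2 with hXdef
  set M : ℕ := X - 1 with hMdef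
  have hM : 2 ≤ M := by omega
  have hM0 : 0 < M := by omega
  have hN0 : 0 < k * M := by positivity
  have hlt : ∀ u : Fin (k * M), u.val / M < k := fun u => by
    rw [Nat.div_lt_iff_lt_mul hM0]; exact u.isLt
  set c : Fin (k * M) → Fin (k * M) → Fin k := fun u _ => ⟨u.val / M, hlt u⟩ with hcdef
  have hcval : ∀ u v, (c u v).val = u.val / M := fun u v => rfl
  have hsurj : ∀ i : Fin k, ∃ u v, c u v = i := by
    intro i
    refine ⟨⟨i.val * M, ?_⟩, ⟨0, hN0⟩, ?_⟩
    · exact Nat.mul_lt_mul_of_lt_of_le i.isLt le_rfl hM0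
    · apply Fin.ext
      simp [hcval, Nat.mul_div_cancel _ hM0]
  have hnoRb : ¬ hasRainbowP4 c := by
    rintro (⟨u₁, u₂, v₁, v₂, h1, h2, h3, h4, h5⟩ | ⟨u₁, u₂, v₁, v₂, h1, h2, h3, h4, h5⟩)
    · exact h5 rfl
    · exact h3 rfl
  have hnoMono : ¬ hasMonoCopy c (pathGraph r ⊕g pathGraph (r + l)) := by
    rintro ⟨i, f, hf, hmono⟩
    have h1 : ∀ j : Fin (r / 2), ∃ u : Fin (k * M), ∃ x : Fin r,
        (x.val = 2 * j.val ∨ x.val = 2 * j.val + 1) ∧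
        f (Sum.inl x) = Sum.inl u ∧ u.val / M = i.val := by
      intro j
      have hj : 2 * j.val + 1 < r := by have := j.isLt; omega
      have hadj : (pathGraph r ⊕g pathGraph (r + l)).Adj
          (Sum.inl ⟨2 * j.val, by omega⟩) (Sum.inl ⟨2 * j.val + 1, hj⟩) := by
        simp [SimpleGraph.sum_adj, pathGraph_adj]
      obtain ⟨u, v, hc, hcase⟩ := hmono _ _ hadj
      have hu : u.val / M = i.val := by
        have := congrArg Fin.val hc; simpa [hcval] using this
      rcases hcase with ⟨ha, hb⟩ | ⟨ha, hb⟩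
      · exact ⟨u, ⟨2 * j.val, by omega⟩, Or.inl rfl, ha, hu⟩
      · exact ⟨u, ⟨2 * j.val + 1, hj⟩, Or.inr rfl, hb, hu⟩
    have h2 : ∀ j : Fin ((r + l) / 2), ∃ u : Fin (k * M), ∃ x : Fin (r + l),
        (x.val = 2 * j.val ∨ x.val = 2 * j.val + 1) ∧
        f (Sum.inr x) = Sum.inl u ∧ u.val / M = i.val := by
      intro j
      have hj : 2 * j.val + 1 < r + l := by have := j.isLt; omega
      have hadj : (pathGraph r ⊕g pathGraph (r + l)).Adj
          (Sum.inr ⟨2 * j.val, by omega⟩) (Sum.inr ⟨2 * j.val + 1, hj⟩) := by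
        simp [SimpleGraph.sum_adj, pathGraph_adj]
      obtain ⟨u, v, hc, hcase⟩ := hmono _ _ hadj
      have hu : u.val / M = i.val := by
        have := congrArg Fin.val hc; simpa [hcval] using this
      rcases hcase with ⟨ha, hb⟩ | ⟨ha, hb⟩
      · exact ⟨u, ⟨2 * j.val, by omega⟩, Or.inl rfl, ha, hu⟩
      · exact ⟨u, ⟨2 * j.val + 1, hj⟩, Or.inr rfl, hb, hu⟩
    choose g1 x1 hx1 hf1 hd1 using h1
    choose g2 x2 hx2 hf2 hd2 using h2
    set Phi : Fin (r / 2) ⊕ Fin ((r + l) / 2) → Fin M := fun s =>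
      match s with
      | Sum.inl j => ⟨(g1 j).val % M, Nat.mod_lt _ hM0⟩
      | Sum.inr j => ⟨(g2 j).val % M, Nat.mod_lt _ hM0⟩ with hPhi
    have hPhiInj : Function.Injective Phi := by
      rintro (j | j) (j' | j') h
      · have hmod : (g1 j).val % M = (g1 j').val % M := congrArg Fin.val h
        have hgeq : g1 j = g1 j' := by
          apply Fin.ext
          have e1 := Nat.div_add_mod (g1 j).val M
          have e2 := Nat.div_add_mod (g1 j').val M
          rw [hd1 j] at e1; rw [hd1 j'] at e2; omega
        have : f (Sum.inl (x1 j)) = f (Sum.inl (x1 j')) := by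
          rw [hf1, hf1, hgeq]
        have hx : x1 j = x1 j' := by
          have := hf this; simpa using this
        have hxv : (x1 j).val = (x1 j').val := congrArg Fin.val hx
        have a1 := hx1 j; have a2 := hx1 j'
        have : j.val = j'.val := by omega
        exact congrArg Sum.inl (Fin.ext this)
      · have hmod : (g1 j).val % M = (g2 j').val % M := congrArg Fin.val h
        have hgeq : g1 j = g2 j' := by
          apply Fin.ext
          have e1 := Nat.div_add_mod (g1 j).val M
          have e2 := Nat.div_add_mod (g2 j').val M
          rw [hd1 j] at e1; rw [hd2 j'] at e2; omega
        have : f (Sum.inl (x1 j)) = f (Sum.inr (x2 j')) := by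
          rw [hf1, hf2, hgeq]
        exact absurd (hf this) (by simp)
      · have hmod : (g2 j).val % M = (g1 j').val % M := congrArg Fin.val h
        have hgeq : g2 j = g1 j' := by
          apply Fin.ext
          have e1 := Nat.div_add_mod (g2 j).val M
          have e2 := Nat.div_add_mod (g1 j').val M
          rw [hd2 j] at e1; rw [hd1 j'] at e2; omega
        have : f (Sum.inr (x2 j)) = f (Sum.inl (x1 j')) := by
          rw [hf1, hf2, hgeq]
        exact absurd (hf this) (by simp)
      · have hmod : (g2 j).val % M = (g2 j').val % M := congrArg Fin.val h
        have hgeq : g2 j = g2 j' := by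
          apply Fin.ext
          have e1 := Nat.div_add_mod (g2 j).val M
          have e2 := Nat.div_add_mod (g2 j').val M
          rw [hd2 j] at e1; rw [hd2 j'] at e2; omega
        have : f (Sum.inr (x2 j)) = f (Sum.inr (x2 j')) := by
          rw [hf2, hf2, hgeq]
        have hx : x2 j = x2 j' := by
          have := hf this; simpa using this
        have hxv : (x2 j).val = (x2 j').val := congrArg Fin.val hx
        have a1 := hx2 j; have a2 := hx2 j'
        have : j.val = j'.val := by omega
        exact congrArg Sum.inr (Fin.ext this)
    have hcard := Fintype.card_le_of_injective Phi hPhiInj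
    simp [Fintype.card_sum] at hcard
    omega
  refine ⟨⟨c, hsurj, hnoRb, hnoMono⟩, ?_⟩
  intro m hm
  by_contra hcon
  push_neg at hcon
  have hkX : k ≤ k * X := Nat.le_mul_of_pos_right k (by omega)
  have hXM : k * M = k * X - k := by
    rw [hMdef, Nat.mul_sub]; simp
  have hmle : m ≤ k * M := by omega
  have := hm.2 (k * M) hmle c hsurj
  rcases this with h | h
  · exact hnoRb h
  · exact hnoMono h
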